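/- Let h : X → Y be a homeomorphism between Smale spaces (X,φ) and (Y,ψ) with h∘φ = ψ^ε∘h, where ε ∈ {1,−1}. Then the map η : (x,z) ∈ G_φ^a ↦ (h(x),h(z)) ∈ G_ψ^a is an isomorphism of étale groupoids, and the map φ̃ : (x,n,z) ∈ G_φ^a⋊ℤ ↦ (h(x), ε·n, h(z)) ∈ G_ψ^a⋊ℤ is an isomorphism of étale groupoids. In particular, G_φ^a ≅ G_ψ^a and G_φ^a⋊ℤ ≅ G_ψ^a⋊ℤ as étale groupoids. -/

import Mathlib

open Filter Set Topology

noncomputable section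

/-- Integer iterate of a homeomorphism. -/
def hIter {X : Type*} [TopologicalSpace X] (φ : X ≃ₜ X) (n : ℤ) (x : X) : X :=
  ((φ.toEquiv : Equiv.Perm X) ^ n) x

/-- The cocycle sums `f^n` of a function `f : X → ℤ` along the iterates of `φ`:
`f^n(x) = Σ_{i=0}^{n-1} f(φ^i(x))` for `n > 0`, `f^0 = 0`, and
`f^n(x) = −Σ_{i=n}^{-1} f(φ^i(x))` for `n < 0`. -/
def cSum {X : Type*} [TopologicalSpace X] (φ : X ≃ₜ X) (f : X → ℤ) (n : ℤ) (x : X) : ℤ :=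
  if 0 ≤ n then ∑ i ∈ Finset.range n.toNat, f (hIter φ i x)
  else -∑ i ∈ Finset.range (-n).toNat, f (hIter φ (n + i) x)

/-- Stable asymptotic pairs (limit definition). -/
def asympS {X : Type*} [MetricSpace X] (φ : X ≃ₜ X) : Set (X × X) :=
  {p | Tendsto (fun n : ℕ => dist (hIter φ n p.1) (hIter φ n p.2)) atTop (nhds 0)}

/-- Unstable asymptotic pairs (limit definition). -/
def asympU {X : Type*} [MetricSpace X] (φ : X ≃ₜ X) : Set (X × X) :=
  {p | Tendsto (fun n : ℕ => dist (hIter φ (-(n : ℤ)) p.1) (hIter φ (-(n : ℤ)) p.2))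
    atTop (nhds 0)}

/-- Asymptotic pairs (limit definition). -/
def asympA {X : Type*} [MetricSpace X] (φ : X ≃ₜ X) : Set (X × X) := asympS φ ∩ asympU φ

/-- The `ω`-limit set of `x`. -/
def omegaSet {X : Type*} [MetricSpace X] (φ : X ≃ₜ X) (x : X) : Set X :=
  {z | ∃ n : ℕ → ℕ, StrictMono n ∧ Tendsto (fun i => hIter φ (n i) x) atTop (nhds z)}

/-- The `α`-limit set of `x`. -/
def alphaSet {X : Type*} [MetricSpace X] (φ : X ≃ₜ X) (x : X) : Set X :=
  {z | ∃ n : ℕ → ℤ, StrictAnti n ∧ Tendsto (fun i => hIter φ (n i) x) atTop (nhds z)}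

/-- A Smale space structure on a compact metric space `X`. -/
structure SmaleSpace (X : Type*) [MetricSpace X] [CompactSpace X] where
  phi : X ≃ₜ X
  eps : ℝ
  lam : ℝ
  br : X → X → X
  eps_pos : 0 < eps
  lam_pos : 0 < lam
  lam_lt_one : lam < 1
  br_cont : ContinuousOn (fun p : X × X => br p.1 p.2) {p : X × X | dist p.1 p.2 < eps}
  br_self : ∀ x : X, br x x = x
  br_assoc_left : ∀ x y z : X, dist x y < eps → dist (br x y) z < eps → dist x z < eps →
    br (br x y) z = br x z
  br_assoc_right : ∀ x y z : X, dist y z < eps → dist x (br y z) < eps → dist x z < eps →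
    br x (br y z) = br x z
  phi_br : ∀ x y : X, dist x y < eps → dist (phi x) (phi y) < eps →
    phi (br x y) = br (phi x) (phi y)
  contract_s : ∀ x y z : X, br y x = y → dist x y < eps → br z x = z → dist x z < eps →
    dist (phi y) (phi z) ≤ lam * dist y z
  contract_u : ∀ x y z : X, br x y = y → dist x y < eps → br x z = z → dist x z < eps →
    dist (phi.symm y) (phi.symm z) ≤ lam * dist y z

namespace SmaleSpace

variable {X Y : Type*} [MetricSpace X] [CompactSpace X] [MetricSpace Y] [CompactSpace Y]

/-- Local stable set `X^s(x,ε)`. -/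
def Xs (S : SmaleSpace X) (x : X) (ε : ℝ) : Set X := {y | S.br y x = y ∧ dist x y < ε}

/-- Local unstable set `X^u(x,ε)`. -/
def Xu (S : SmaleSpace X) (x : X) (ε : ℝ) : Set X := {y | S.br x y = y ∧ dist x y < ε}

def Gs0 (S : SmaleSpace X) : Set (X × X) := {p | p.2 ∈ S.Xs p.1 S.eps}

def Gu0 (S : SmaleSpace X) : Set (X × X) := {p | p.2 ∈ S.Xu p.1 S.eps}

/-- `G_φ^{s,n} = (φ×φ)^{-n}(G_φ^{s,0})`. -/
def GsN (S : SmaleSpace X) (n : ℤ) : Set (X × X) :=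
  {p | (hIter S.phi n p.1, hIter S.phi n p.2) ∈ S.Gs0}

/-- `G_φ^{u,n} = (φ×φ)^{n}(G_φ^{u,0})`. -/
def GuN (S : SmaleSpace X) (n : ℤ) : Set (X × X) :=
  {p | (hIter S.phi (-n) p.1, hIter S.phi (-n) p.2) ∈ S.Gu0}

def GaN (S : SmaleSpace X) (n : ℤ) : Set (X × X) := S.GsN n ∩ S.GuN n

/-- The asymptotic equivalence relation `G_φ^a = ⋃_{n ≥ 0} G_φ^{a,n}`. -/
def Ga (S : SmaleSpace X) : Set (X × X) := ⋃ n : ℕ, S.GaN n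

lemma gaN_subset_ga (S : SmaleSpace X) (n : ℕ) : S.GaN n ⊆ S.Ga :=
  Set.subset_iUnion (fun k : ℕ => S.GaN k) n

/-- The inductive limit topology on `G_φ^a`: a set is open iff its intersection with each
`G_φ^{a,n}` is open in the subspace topology from `X × X`. -/
def gaTopology (S : SmaleSpace X) : TopologicalSpace ↥S.Ga :=
  ⨆ n : ℕ, TopologicalSpace.coinduced (Set.inclusion (S.gaN_subset_ga n)) inferInstance

/-- Irreducibility of a Smale space. -/
def Irreducible (S : SmaleSpace X) : Prop :=
  ∀ U V : Set X, IsOpen U → U.Nonempty → IsOpen V → V.Nonempty →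
    ∃ K : ℕ, ((hIter S.phi K '' U) ∩ V).Nonempty

def IsPeriodicPoint (S : SmaleSpace X) (x : X) : Prop :=
  ∃ p : ℕ, 0 < p ∧ hIter S.phi p x = x

/-- `h` is a flip conjugacy between `(X,φ)` and `(Y,ψ)`. -/
def IsFlipConjugacy (S : SmaleSpace X) (T : SmaleSpace Y) (h : X ≃ₜ Y) : Prop :=
  (∀ x, h (S.phi x) = T.phi (h x)) ∨ (∀ x, h (S.phi x) = T.phi.symm (h x))

def FlipConjugate (S : SmaleSpace X) (T : SmaleSpace Y) : Prop :=
  ∃ h : X ≃ₜ Y, IsFlipConjugacy S T h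

/-- An isomorphism of the principal étale groupoids `G_φ^a` and `G_ψ^a`:
a bijection which is a homeomorphism for the inductive limit topologies and preserves
the (equivalence relation) groupoid structure. -/
structure GaIso (S : SmaleSpace X) (T : SmaleSpace Y) where
  toEquiv : ↥S.Ga ≃ ↥T.Ga
  cont : @Continuous _ _ S.gaTopology T.gaTopology toEquiv
  cont_symm : @Continuous _ _ T.gaTopology S.gaTopology toEquiv.symm
  map_mul : ∀ p q r : ↥S.Ga, (p : X × X).2 = (q : X × X).1 →
    (r : X × X) = ((p : X × X).1, (q : X × X).2) →
    (toEquiv p : Y × Y).2 = (toEquiv q : Y × Y).1 ∧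
      (toEquiv r : Y × Y) = ((toEquiv p : Y × Y).1, (toEquiv q : Y × Y).2)

end SmaleSpace

section hIterLemmas

variable {Z : Type*} [TopologicalSpace Z]

lemma hIter_add (φ : Z ≃ₜ Z) (m n : ℤ) (x : Z) :
    hIter φ (m + n) x = hIter φ m (hIter φ n x) := by
  simp [hIter, zpow_add, Equiv.Perm.mul_apply]

lemma hIter_zero (φ : Z ≃ₜ Z) (x : Z) : hIter φ 0 x = x := by
  simp [hIter]

lemma hIter_one (φ : Z ≃ₜ Z) (x : Z) : hIter φ 1 x = φ x := by
  simp [hIter]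

lemma hIter_neg_one (φ : Z ≃ₜ Z) (x : Z) : hIter φ (-1) x = φ.symm x := by
  show (φ.toEquiv ^ (-1 : ℤ)) x = φ.symm x
  rw [zpow_neg_one]
  rfl

lemma hIter_succ (φ : Z ≃ₜ Z) (n : ℤ) (x : Z) :
    hIter φ (n + 1) x = φ (hIter φ n x) := by
  rw [add_comm, hIter_add, hIter_one]

lemma hIter_sub_one (φ : Z ≃ₜ Z) (n : ℤ) (x : Z) :
    hIter φ (n - 1) x = φ.symm (hIter φ n x) := by
  rw [sub_eq_neg_add, hIter_add, hIter_neg_one]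

end hIterLemmas

namespace SmaleSpace

variable {X Y : Type*} [MetricSpace X] [CompactSpace X] [MetricSpace Y] [CompactSpace Y]

lemma gsN_mono_succ (S : SmaleSpace X) (n : ℤ) : S.GsN n ⊆ S.GsN (n + 1) := by
  rintro ⟨x, z⟩ hp
  obtain ⟨hbr, hd⟩ : S.br (hIter S.phi n z) (hIter S.phi n x) = hIter S.phi n z ∧
      dist (hIter S.phi n x) (hIter S.phi n z) < S.eps := hp
  set a := hIter S.phi n x with ha
  set b := hIter S.phi n z with hb
  have h1 : dist (S.phi b) (S.phi a) ≤ S.lam * dist b a :=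
    S.contract_s a b a hbr hd (S.br_self a) (by simpa using S.eps_pos)
  have h2 : dist (S.phi b) (S.phi a) < S.eps := by
    have hba : dist b a < S.eps := by rwa [dist_comm]
    nlinarith [dist_nonneg (x := b) (y := a), S.lam_lt_one, S.lam_pos]
  have h3 : S.phi (S.br b a) = S.br (S.phi b) (S.phi a) :=
    S.phi_br b a (by rwa [dist_comm]) h2
  constructor
  · show S.br (hIter S.phi (n + 1) z) (hIter S.phi (n + 1) x) = hIter S.phi (n + 1) z
    rw [hIter_succ, hIter_succ, ← ha, ← hb, ← h3, hbr]
  · show dist (hIter S.phi (n + 1) x) (hIter S.phi (n + 1) z) < S.eps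
    rw [hIter_succ, hIter_succ, ← ha, ← hb, dist_comm]
    exact h2

lemma guN_mono_succ (S : SmaleSpace X) (n : ℤ) : S.GuN n ⊆ S.GuN (n + 1) := by
  rintro ⟨x, z⟩ hp
  obtain ⟨hbr, hd⟩ : S.br (hIter S.phi (-n) x) (hIter S.phi (-n) z) = hIter S.phi (-n) z ∧
      dist (hIter S.phi (-n) x) (hIter S.phi (-n) z) < S.eps := hp
  set a := hIter S.phi (-n) x with ha
  set b := hIter S.phi (-n) z with hb
  have h1 : dist (S.phi.symm b) (S.phi.symm a) ≤ S.lam * dist b a :=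
    S.contract_u a b a hbr hd (S.br_self a) (by simpa using S.eps_pos)
  have h2 : dist (S.phi.symm a) (S.phi.symm b) < S.eps := by
    rw [dist_comm]
    have hba : dist b a < S.eps := by rwa [dist_comm] at hd
    nlinarith [dist_nonneg (x := b) (y := a), S.lam_lt_one, S.lam_pos]
  have h3 : S.phi (S.br (S.phi.symm a) (S.phi.symm b)) = S.br a b := by
    have := S.phi_br (S.phi.symm a) (S.phi.symm b) h2
      (by rw [Homeomorph.apply_symm_apply, Homeomorph.apply_symm_apply]; exact hd)
    rw [this, Homeomorph.apply_symm_apply, Homeomorph.apply_symm_apply]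
  have h4 : S.br (S.phi.symm a) (S.phi.symm b) = S.phi.symm b := by
    have := congrArg S.phi.symm h3
    rwa [Homeomorph.symm_apply_apply, hbr] at this
  have hiter : ∀ w : X, hIter S.phi (-(n + 1)) w = S.phi.symm (hIter S.phi (-n) w) := by
    intro w
    have : (-(n + 1) : ℤ) = -n - 1 := by ring
    rw [this, hIter_sub_one]
  constructor
  · show S.br (hIter S.phi (-(n + 1)) x) (hIter S.phi (-(n + 1)) z) = hIter S.phi (-(n + 1)) z
    rw [hiter, hiter, ← ha, ← hb, h4]
  · show dist (hIter S.phi (-(n + 1)) x) (hIter S.phi (-(n + 1)) z) < S.eps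
    rw [hiter, hiter, ← ha, ← hb]
    exact h2

set_option maxHeartbeats 1000000 in
lemma gsN_mono (S : SmaleSpace X) : ∀ {m n : ℤ}, m ≤ n → S.GsN m ⊆ S.GsN n := by
  intro m n h
  obtain ⟨k, rfl⟩ := Int.le.dest h
  induction k with
  | zero => simp
  | succ k ih =>
    have h2 : m + (↑(k + 1) : ℤ) = (m + ↑k) + 1 := by push_cast; ring
    rw [h2]
    exact (ih (by omega)).trans (S.gsN_mono_succ (m + ↑k))

set_option maxHeartbeats 1000000 in
lemma guN_mono (S : SmaleSpace X) : ∀ {m n : ℤ}, m ≤ n → S.GuN m ⊆ S.GuN n := by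
  intro m n h
  obtain ⟨k, rfl⟩ := Int.le.dest h
  induction k with
  | zero => simp
  | succ k ih =>
    have h2 : m + (↑(k + 1) : ℤ) = (m + ↑k) + 1 := by push_cast; ring
    rw [h2]
    exact (ih (by omega)).trans (S.guN_mono_succ (m + ↑k))

lemma mem_gsN_hIter (S : SmaleSpace X) (k m : ℤ) (x z : X) :
    (hIter S.phi m x, hIter S.phi m z) ∈ S.GsN k ↔ (x, z) ∈ S.GsN (k + m) := by
  simp only [GsN, Set.mem_setOf_eq, hIter_add]

lemma mem_guN_hIter (S : SmaleSpace X) (k m : ℤ) (x z : X) :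
    (hIter S.phi m x, hIter S.phi m z) ∈ S.GuN k ↔ (x, z) ∈ S.GuN (k - m) := by
  have e : ∀ w : X, hIter S.phi (-(k - m)) w = hIter S.phi (-k) (hIter S.phi m w) := by
    intro w
    rw [← hIter_add]
    congr 1
    ring
  simp only [GuN, Set.mem_setOf_eq, e]

lemma ga_shift (S : SmaleSpace X) (m : ℤ) {x z : X} (h : (x, z) ∈ S.Ga) :
    (hIter S.phi m x, hIter S.phi m z) ∈ S.Ga := by
  obtain ⟨k, hk⟩ := Set.mem_iUnion.1 h
  obtain ⟨hs, hu⟩ := hk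
  refine Set.mem_iUnion.2 ⟨k + m.natAbs, ?_, ?_⟩
  · rw [mem_gsN_hIter]
    exact S.gsN_mono (by omega) hs
  · rw [mem_guN_hIter]
    exact S.guN_mono (by omega) hu

/-- The semidirect product groupoid `G_φ^a ⋊ ℤ` as a subset of `X × ℤ × X`. -/
def GaZ (S : SmaleSpace X) : Set (X × ℤ × X) :=
  {q | (hIter S.phi q.2.1 q.1, q.2.2) ∈ S.Ga}

lemma gaZ_gamma_mem (S : SmaleSpace X) {q : X × ℤ × X} (hq : q ∈ S.GaZ) :
    (q.1, hIter S.phi (-q.2.1) q.2.2) ∈ S.Ga := by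
  have h := S.ga_shift (-q.2.1) hq
  rwa [← hIter_add, neg_add_cancel, hIter_zero] at h

/-- The map `γ(x,n,y) = ((x, φ^{-n}(y)), n)` from `G_φ^a ⋊ ℤ` to `G_φ^a × ℤ`. -/
def gaZGamma (S : SmaleSpace X) (q : ↥S.GaZ) : ↥S.Ga × ℤ :=
  (⟨((q : X × ℤ × X).1, hIter S.phi (-(q : X × ℤ × X).2.1) (q : X × ℤ × X).2.2),
    S.gaZ_gamma_mem q.2⟩, (q : X × ℤ × X).2.1)

/-- The topology on `G_φ^a ⋊ ℤ` making `γ` a homeomorphism onto `G_φ^a × ℤ`. -/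
def gaZTopology (S : SmaleSpace X) : TopologicalSpace ↥S.GaZ :=
  letI := S.gaTopology
  TopologicalSpace.induced S.gaZGamma inferInstance

/-- The canonical cocycle `d_φ : G_φ^a ⋊ ℤ → ℤ`, `d_φ(x,n,z) = n`. -/
def dMap (S : SmaleSpace X) (q : ↥S.GaZ) : ℤ := (q : X × ℤ × X).2.1

/-- An isomorphism of the étale groupoids `G_φ^a ⋊ ℤ` and `G_ψ^a ⋊ ℤ`: a bijection which
is a homeomorphism and preserves the groupoid structure (composability and products). -/
structure GaZIso (S : SmaleSpace X) (T : SmaleSpace Y) where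
  toEquiv : ↥S.GaZ ≃ ↥T.GaZ
  cont : @Continuous _ _ S.gaZTopology T.gaZTopology toEquiv
  cont_symm : @Continuous _ _ T.gaZTopology S.gaZTopology toEquiv.symm
  map_mul : ∀ g g' gp : ↥S.GaZ,
    (g : X × ℤ × X).2.2 = (g' : X × ℤ × X).1 →
    (gp : X × ℤ × X) = ((g : X × ℤ × X).1,
      (g : X × ℤ × X).2.1 + (g' : X × ℤ × X).2.1, (g' : X × ℤ × X).2.2) →
    (toEquiv g : Y × ℤ × Y).2.2 = (toEquiv g' : Y × ℤ × Y).1 ∧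
      (toEquiv gp : Y × ℤ × Y) = ((toEquiv g : Y × ℤ × Y).1,
        (toEquiv g : Y × ℤ × Y).2.1 + (toEquiv g' : Y × ℤ × Y).2.1,
        (toEquiv g' : Y × ℤ × Y).2.2)

end SmaleSpace

section auxA

lemma hIter_symm {Z : Type*} [TopologicalSpace Z] (φ : Z ≃ₜ Z) (k : ℤ) (x : Z) :
    hIter φ.symm k x = hIter φ (-k) x := by
  show ((φ.toEquiv⁻¹ : Equiv.Perm Z) ^ k) x = (φ.toEquiv ^ (-k)) x
  rw [inv_zpow, ← zpow_neg]

namespace SmaleSpace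

variable {X Y : Type*} [MetricSpace X] [CompactSpace X] [MetricSpace Y] [CompactSpace Y]

/-- The reverse Smale space: `φ⁻¹` with the flipped bracket. -/
def rev (S : SmaleSpace X) : SmaleSpace X where
  phi := S.phi.symm
  eps := S.eps
  lam := S.lam
  br x y := S.br y x
  eps_pos := S.eps_pos
  lam_pos := S.lam_pos
  lam_lt_one := S.lam_lt_one
  br_cont := by
    have h1 : ContinuousOn (fun p : X × X => S.br p.1 p.2) {p : X × X | dist p.1 p.2 < S.eps} :=
      S.br_cont
    have h2 : ContinuousOn ((fun p : X × X => S.br p.1 p.2) ∘ Prod.swap)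
        {p : X × X | dist p.1 p.2 < S.eps} := by
      apply h1.comp continuous_swap.continuousOn
      intro p hp
      simpa [dist_comm] using hp
    exact h2
  br_self := S.br_self
  br_assoc_left x y z h1 h2 h3 :=
    S.br_assoc_right z y x (by rwa [dist_comm]) (by rwa [dist_comm] at h2) (by rwa [dist_comm])
  br_assoc_right x y z h1 h2 h3 :=
    S.br_assoc_left z y x (by rwa [dist_comm]) (by rwa [dist_comm] at h2) (by rwa [dist_comm])
  phi_br x y h1 h2 := by
    have h3 : S.phi (S.br (S.phi.symm y) (S.phi.symm x))
        = S.br (S.phi (S.phi.symm y)) (S.phi (S.phi.symm x)) :=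
      S.phi_br _ _ (by rwa [dist_comm] at h2) (by
        rw [Homeomorph.apply_symm_apply, Homeomorph.apply_symm_apply]; rwa [dist_comm])
    rw [Homeomorph.apply_symm_apply, Homeomorph.apply_symm_apply] at h3
    show S.phi.symm (S.br y x) = S.br (S.phi.symm y) (S.phi.symm x)
    rw [← h3, Homeomorph.symm_apply_apply]
  contract_s x y z := S.contract_u x y z
  contract_u x y z h1 h2 h3 h4 := by
    have := S.contract_s x y z h1 h2 h3 h4
    simpa using this

lemma gs0_step (S : SmaleSpace X) {a b : X} (hab : (a, b) ∈ S.Gs0) :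
    (S.phi a, S.phi b) ∈ S.Gs0 ∧ dist (S.phi a) (S.phi b) ≤ S.lam * dist a b := by
  obtain ⟨hbr, hd⟩ : S.br b a = b ∧ dist a b < S.eps := hab
  have h1 : dist (S.phi b) (S.phi a) ≤ S.lam * dist b a :=
    S.contract_s a b a hbr hd (S.br_self a) (by simpa using S.eps_pos)
  have h2 : dist (S.phi b) (S.phi a) < S.eps := by
    have hba : dist b a < S.eps := by rwa [dist_comm]
    nlinarith [dist_nonneg (x := b) (y := a), S.lam_lt_one, S.lam_pos]
  have h3 : S.phi (S.br b a) = S.br (S.phi b) (S.phi a) :=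
    S.phi_br b a (by rwa [dist_comm]) h2
  refine ⟨⟨by rw [← h3, hbr], by rwa [dist_comm]⟩, ?_⟩
  rw [dist_comm (S.phi a), dist_comm a]
  exact h1

lemma gu0_step (S : SmaleSpace X) {a b : X} (hab : (a, b) ∈ S.Gu0) :
    (S.phi.symm a, S.phi.symm b) ∈ S.Gu0 ∧
      dist (S.phi.symm a) (S.phi.symm b) ≤ S.lam * dist a b :=
  S.rev.gs0_step hab

lemma gs0_iter (S : SmaleSpace X) {a b : X} (hab : (a, b) ∈ S.Gs0) (k : ℕ) :
    (hIter S.phi k a, hIter S.phi k b) ∈ S.Gs0 ∧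
      dist (hIter S.phi k a) (hIter S.phi k b) ≤ S.lam ^ k * dist a b := by
  induction k with
  | zero => simpa [hIter_zero] using hab
  | succ k ih =>
    have e : ((k + 1 : ℕ) : ℤ) = (k : ℤ) + 1 := by push_cast; ring
    rw [e, hIter_succ, hIter_succ]
    obtain ⟨ih1, ih2⟩ := ih
    obtain ⟨s1, s2⟩ := S.gs0_step ih1
    refine ⟨s1, s2.trans ?_⟩
    rw [pow_succ, mul_comm (S.lam ^ k), mul_assoc]
    exact mul_le_mul_of_nonneg_left ih2 S.lam_pos.le

lemma gu0_iter (S : SmaleSpace X) {a b : X} (hab : (a, b) ∈ S.Gu0) (k : ℕ) :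
    (hIter S.phi (-(k : ℤ)) a, hIter S.phi (-(k : ℤ)) b) ∈ S.Gu0 ∧
      dist (hIter S.phi (-(k : ℤ)) a) (hIter S.phi (-(k : ℤ)) b) ≤ S.lam ^ k * dist a b := by
  have := S.rev.gs0_iter (a := a) (b := b) hab k
  rwa [show S.rev.phi = S.phi.symm from rfl, hIter_symm, hIter_symm] at this

end SmaleSpace

end auxA
namespace SmaleSpace

variable {X Y : Type*} [MetricSpace X] [CompactSpace X] [MetricSpace Y] [CompactSpace Y]

omit [CompactSpace X] in
/-- Points whose distance stays small under a contracting sequence coincide. -/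
lemma eq_of_dist_le_pow {lam C : ℝ} (hl0 : 0 ≤ lam) (hl1 : lam < 1) {p q : X}
    (h : ∀ k : ℕ, dist p q ≤ lam ^ k * C) : p = q := by
  have ht : Filter.Tendsto (fun k : ℕ => lam ^ k * C) Filter.atTop (nhds 0) := by
    simpa using (tendsto_pow_atTop_nhds_zero_of_lt_one hl0 hl1).mul_const C
  have : dist p q ≤ 0 := ge_of_tendsto' ht h
  exact dist_le_zero.1 this

/-- Near the diagonal, the bracket of two points is close to both of them. -/
lemma exists_delta_bracket (S : SmaleSpace X) {ρ : ℝ} (hρ : 0 < ρ) :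
    ∃ δ : ℝ, 0 < δ ∧ δ ≤ ρ ∧ δ ≤ S.eps ∧ ∀ p q : X, dist p q < δ →
      dist (S.br q p) p < ρ ∧ dist (S.br q p) q < ρ := by
  set U : Set (X × X) := {p : X × X | dist p.1 p.2 < S.eps} with hU
  have hUopen : IsOpen U := isOpen_lt (by fun_prop) continuous_const
  set f : X × X → ℝ := fun p => max (dist (S.br p.1 p.2) p.1) (dist (S.br p.1 p.2) p.2) with hf
  have hd1 : ContinuousOn (fun p : X × X => dist (S.br p.1 p.2) p.1) U :=
    continuous_dist.comp_continuousOn' (f := fun p : X × X => (S.br p.1 p.2, p.1))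
      (ContinuousOn.prodMk S.br_cont continuousOn_fst)
  have hd2 : ContinuousOn (fun p : X × X => dist (S.br p.1 p.2) p.2) U :=
    continuous_dist.comp_continuousOn' (f := fun p : X × X => (S.br p.1 p.2, p.2))
      (ContinuousOn.prodMk S.br_cont continuousOn_snd)
  have hfc : ContinuousOn f U := continuous_max.comp_continuousOn' (hd1.prodMk hd2)
  set V : Set (X × X) := U ∩ f ⁻¹' (Set.Iio ρ) with hV
  have hVopen : IsOpen V := hfc.isOpen_inter_preimage hUopen isOpen_Iio
  have hdiag : (Set.range fun x : X => (x, x)) ⊆ V := by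
    rintro _ ⟨x, rfl⟩
    refine ⟨by simpa [hU] using S.eps_pos, ?_⟩
    simp [hf, S.br_self, hρ]
  have hcomp : IsCompact (Set.range fun x : X => (x, x)) :=
    (isCompact_range (by fun_prop))
  obtain ⟨δ₀, hδ₀, hsub⟩ := hcomp.exists_thickening_subset_open hVopen hdiag
  refine ⟨min δ₀ (min ρ S.eps), lt_min hδ₀ (lt_min hρ S.eps_pos), (min_le_right _ _).trans (min_le_left _ _),
    (min_le_right _ _).trans (min_le_right _ _), ?_⟩
  intro p q hpq
  have hmem : (q, p) ∈ Metric.thickening δ₀ (Set.range fun x : X => (x, x)) := by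
    rw [Metric.mem_thickening_iff]
    refine ⟨(q, q), ⟨q, rfl⟩, ?_⟩
    rw [Prod.dist_eq]
    simp only [dist_self, max_lt_iff]
    exact ⟨hδ₀, lt_of_lt_of_le hpq (min_le_left _ _)⟩
  have := hsub hmem
  obtain ⟨-, hfv⟩ := this
  have hfv' : f (q, p) < ρ := hfv
  rw [hf] at hfv'
  simp only [max_lt_iff] at hfv'
  exact ⟨hfv'.2, hfv'.1⟩

/-- Shadowing: if all forward iterates stay uniformly close, the pair is stably related. -/
lemma shadowS (S : SmaleSpace X) :
    ∃ δ : ℝ, 0 < δ ∧ ∀ a b : X,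
      (∀ k : ℕ, dist (hIter S.phi k a) (hIter S.phi k b) < δ) → (a, b) ∈ S.Gs0 := by
  have heps4 : (0 : ℝ) < S.eps / 4 := by linarith [S.eps_pos]
  obtain ⟨δ₁, hδ₁, hδ₁ρ, hδ₁ε, hbr⟩ := S.exists_delta_bracket heps4
  refine ⟨δ₁, hδ₁, ?_⟩
  intro a b hclose
  have hab : dist a b < δ₁ := by simpa [hIter_zero] using hclose 0
  have habε : dist a b < S.eps := lt_of_lt_of_le hab hδ₁ε
  set w : X := S.br b a with hw
  obtain ⟨hwa, hwb⟩ := hbr a b hab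
  -- w ∈ X^s(a, eps) : br w a = w
  have hwsa : (a, w) ∈ S.Gs0 := by
    refine ⟨?_, by rw [dist_comm]; exact lt_of_lt_of_le hwa (by linarith [S.eps_pos])⟩
    exact S.br_assoc_left b a a (by rwa [dist_comm] at habε)
      (lt_of_lt_of_le hwa (by linarith [S.eps_pos])) (by rwa [dist_comm] at habε)
  -- w ∈ X^u(b, eps) : br b w = w
  have hwub : S.br b w = w :=
    S.br_assoc_right b b a (by rwa [dist_comm] at habε)
      (by rw [dist_comm] at hwb; exact lt_of_lt_of_le hwb (by linarith [S.eps_pos]))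
      (by rwa [dist_comm] at habε)
  -- distance bounds for (b, w) along forward iterates
  have hbw : ∀ k : ℕ, dist (hIter S.phi k b) (hIter S.phi k w) < δ₁ + S.eps / 4 := by
    intro k
    have h1 := (S.gs0_iter hwsa k).2
    have h2 : dist (hIter S.phi k a) (hIter S.phi k w) ≤ S.eps / 4 := by
      refine h1.trans ?_
      have : S.lam ^ k ≤ 1 := pow_le_one₀ S.lam_pos.le S.lam_lt_one.le
      have hda : dist a w ≤ S.eps / 4 := by rw [dist_comm]; exact hwa.le
      nlinarith [dist_nonneg (x := a) (y := w), pow_nonneg S.lam_pos.le k]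
    calc dist (hIter S.phi k b) (hIter S.phi k w)
        ≤ dist (hIter S.phi k b) (hIter S.phi k a) + dist (hIter S.phi k a) (hIter S.phi k w) :=
          dist_triangle _ _ _
      _ < δ₁ + S.eps / 4 := by
          have := hclose k
          rw [dist_comm (hIter S.phi k a)] at this
          linarith
  have hδsum : δ₁ + S.eps / 4 ≤ S.eps := by linarith [hδ₁ρ]
  have hbwε : ∀ k : ℕ, dist (hIter S.phi k b) (hIter S.phi k w) < S.eps :=
    fun k => lt_of_lt_of_le (hbw k) hδsum
  -- the unstable relation propagates forward
  have hrel : ∀ k : ℕ, S.br (hIter S.phi k b) (hIter S.phi k w) = hIter S.phi k w := by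
    intro k
    induction k with
    | zero => simpa [hIter_zero] using hwub
    | succ k ih =>
      have e : ((k + 1 : ℕ) : ℤ) = (k : ℤ) + 1 := by push_cast; ring
      have hb1 : dist (S.phi (hIter S.phi k b)) (S.phi (hIter S.phi k w)) < S.eps := by
        rw [← hIter_succ, ← hIter_succ, ← e]; exact hbwε (k + 1)
      have h3 := S.phi_br (hIter S.phi k b) (hIter S.phi k w) (hbwε k) hb1
      rw [ih] at h3
      rw [e, hIter_succ, hIter_succ, ← h3]
  -- contraction backwards kills the distance
  have hcontr : ∀ k : ℕ, dist b w ≤ S.lam ^ k * dist (hIter S.phi k b) (hIter S.phi k w) := by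
    intro k
    induction k with
    | zero => simp [hIter_zero]
    | succ k ih =>
      have e : ((k + 1 : ℕ) : ℤ) = (k : ℤ) + 1 := by push_cast; ring
      have hc := S.contract_u (hIter S.phi (k + 1 : ℕ) b) (hIter S.phi (k + 1 : ℕ) w)
        (hIter S.phi (k + 1 : ℕ) b) (hrel (k + 1)) (hbwε (k + 1))
        (S.br_self _) (by simpa using S.eps_pos)
      have hps : ∀ u : X, S.phi.symm (hIter S.phi (k + 1 : ℕ) u) = hIter S.phi k u := by
        intro u
        rw [show ((k + 1 : ℕ) : ℤ) = (k : ℤ) + 1 by push_cast; ring, hIter_succ,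
          Homeomorph.symm_apply_apply]
      rw [hps, hps] at hc
      calc dist b w ≤ S.lam ^ k * dist (hIter S.phi k b) (hIter S.phi k w) := ih
        _ = S.lam ^ k * dist (hIter S.phi k w) (hIter S.phi k b) := by rw [dist_comm]
        _ ≤ S.lam ^ k * (S.lam * dist (hIter S.phi (k+1:ℕ) w) (hIter S.phi (k+1:ℕ) b)) :=
            mul_le_mul_of_nonneg_left hc (pow_nonneg S.lam_pos.le k)
        _ = S.lam ^ (k + 1) * dist (hIter S.phi (k+1:ℕ) b) (hIter S.phi (k+1:ℕ) w) := by
            rw [dist_comm (hIter S.phi ((k+1:ℕ):ℤ) w)]; ring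
  have hbweq : b = w := by
    refine eq_of_dist_le_pow S.lam_pos.le S.lam_lt_one (C := S.eps) ?_
    intro k
    refine (hcontr k).trans ?_
    exact mul_le_mul_of_nonneg_left ((hbwε k).le) (pow_nonneg S.lam_pos.le k)
  exact ⟨hbweq.symm, habε⟩

end SmaleSpace
namespace SmaleSpace

variable {X Y : Type*} [MetricSpace X] [CompactSpace X] [MetricSpace Y] [CompactSpace Y]

/-- Shadowing: if all backward iterates stay uniformly close, the pair is unstably related. -/
lemma shadowU (S : SmaleSpace X) :
    ∃ δ : ℝ, 0 < δ ∧ ∀ a b : X,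
      (∀ k : ℕ, dist (hIter S.phi (-(k : ℤ)) a) (hIter S.phi (-(k : ℤ)) b) < δ) →
        (a, b) ∈ S.Gu0 := by
  obtain ⟨δ, hδ, hsh⟩ := S.rev.shadowS
  refine ⟨δ, hδ, ?_⟩
  intro a b hcl
  refine hsh a b ?_
  intro k
  simp only [show S.rev.phi = S.phi.symm from rfl, hIter_symm]
  exact hcl k

section conj

variable (S : SmaleSpace X) (T : SmaleSpace Y) (h : X ≃ₜ Y) (ε : ℤ)

lemma hIter_conj (hconj : ∀ x : X, h (S.phi x) = hIter T.phi ε (h x)) :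
    ∀ (k : ℤ) (x : X), h (hIter S.phi k x) = hIter T.phi (ε * k) (h x) := by
  have hsymm : ∀ x : X, h (S.phi.symm x) = hIter T.phi (-ε) (h x) := by
    intro x
    have h1 := hconj (S.phi.symm x)
    rw [Homeomorph.apply_symm_apply] at h1
    have h2 : hIter T.phi (-ε) (h x) = hIter T.phi (-ε) (hIter T.phi ε (h (S.phi.symm x))) := by
      rw [h1]
    rw [← hIter_add, neg_add_cancel, hIter_zero] at h2
    exact h2.symm
  intro k
  induction k using Int.induction_on with
  | zero => intro x; simp [hIter_zero]
  | succ k ih =>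
    intro x
    rw [hIter_succ, hconj, ih, ← hIter_add]
    congr 1
    ring
  | pred k ih =>
    intro x
    rw [show (-(k : ℤ) - 1) = (-(k : ℤ)) - 1 from rfl, hIter_sub_one, hsymm, ih, ← hIter_add]
    congr 1
    ring

lemma maps_gaN (hε : ε = 1 ∨ ε = -1) (hconj : ∀ x : X, h (S.phi x) = hIter T.phi ε (h x)) :
    ∃ k0 : ℕ, ∀ (n : ℕ) (x z : X),
      (x, z) ∈ S.GaN n → (h x, h z) ∈ T.GaN ((n : ℤ) + k0) := by
  obtain ⟨δs, hδs, hshs⟩ := T.shadowS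
  obtain ⟨δu, hδu, hshu⟩ := T.shadowU
  set δT : ℝ := min δs δu with hδT
  have hδTpos : 0 < δT := lt_min hδs hδu
  obtain ⟨δX, hδXpos, hδX⟩ := Metric.uniformContinuous_iff.1
    (CompactSpace.uniformContinuous_of_continuous h.continuous) δT hδTpos
  obtain ⟨k0, hk0⟩ : ∃ k0 : ℕ, S.lam ^ k0 * S.eps < δX := by
    have ht : Filter.Tendsto (fun k : ℕ => S.lam ^ k * S.eps) Filter.atTop (nhds 0) := by
      simpa using (tendsto_pow_atTop_nhds_zero_of_lt_one S.lam_pos.le S.lam_lt_one).mul_const S.eps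
    obtain ⟨k0, hk0⟩ := (ht.eventually (eventually_lt_nhds hδXpos)).exists
    exact ⟨k0, hk0⟩
  refine ⟨k0, ?_⟩
  intro n x z hxz
  obtain ⟨hs, hu⟩ := hxz
  -- decay of distances of iterates of (x, z)
  have decS : ∀ m : ℕ, dist (hIter S.phi ((n : ℤ) + m) x) (hIter S.phi ((n : ℤ) + m) z)
      ≤ S.lam ^ m * S.eps := by
    intro m
    have h1 := (S.gs0_iter hs m).2
    rw [← hIter_add, ← hIter_add, add_comm (m : ℤ) (n : ℤ)] at h1
    refine h1.trans ?_
    exact mul_le_mul_of_nonneg_left hs.2.le (pow_nonneg S.lam_pos.le m)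
  have decU : ∀ m : ℕ, dist (hIter S.phi (-((n : ℤ) + m)) x) (hIter S.phi (-((n : ℤ) + m)) z)
      ≤ S.lam ^ m * S.eps := by
    intro m
    have h1 := (S.gu0_iter hu m).2
    rw [← hIter_add, ← hIter_add] at h1
    rw [show (-((n:ℤ) + m)) = -(m : ℤ) + -(n : ℤ) from by ring]
    refine h1.trans ?_
    exact mul_le_mul_of_nonneg_left hu.2.le (pow_nonneg S.lam_pos.le m)
  set N : ℕ := n + k0 with hN
  have hbound : ∀ m : ℕ, S.lam ^ (k0 + m) * S.eps < δX := by
    intro m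
    have : S.lam ^ (k0 + m) ≤ S.lam ^ k0 :=
      pow_le_pow_of_le_one S.lam_pos.le S.lam_lt_one.le (Nat.le_add_right _ _)
    nlinarith [S.eps_pos]
  have HS : ∀ m : ℕ, dist (hIter S.phi ((N : ℤ) + m) x) (hIter S.phi ((N : ℤ) + m) z) < δX := by
    intro m
    have := decS (k0 + m)
    rw [show (n : ℤ) + ((k0 + m : ℕ) : ℤ) = (N : ℤ) + m from by push_cast [hN]; ring] at this
    exact lt_of_le_of_lt this (hbound m)
  have HU : ∀ m : ℕ, dist (hIter S.phi (-((N : ℤ) + m)) x) (hIter S.phi (-((N : ℤ) + m)) z)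
      < δX := by
    intro m
    have := decU (k0 + m)
    rw [show (-((n:ℤ) + ((k0 + m : ℕ) : ℤ))) = -((N : ℤ) + m) from by push_cast [hN]; ring] at this
    exact lt_of_le_of_lt this (hbound m)
  -- transfer to T via h
  have TS : ∀ m : ℕ, dist (hIter T.phi ((N : ℤ) + m) (h x)) (hIter T.phi ((N : ℤ) + m) (h z))
      < δT := by
    intro m
    rcases hε with rfl | rfl
    · rw [show ((N : ℤ) + m) = 1 * ((N : ℤ) + m) from by ring, ← hIter_conj S T h 1 hconj,
        ← hIter_conj S T h 1 hconj]
      exact hδX (HS m)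
    · rw [show ((N : ℤ) + m) = (-1) * (-((N : ℤ) + m)) from by ring,
        ← hIter_conj S T h (-1) hconj, ← hIter_conj S T h (-1) hconj]
      exact hδX (HU m)
  have TU : ∀ m : ℕ, dist (hIter T.phi (-((N : ℤ) + m)) (h x))
      (hIter T.phi (-((N : ℤ) + m)) (h z)) < δT := by
    intro m
    rcases hε with rfl | rfl
    · rw [show (-((N : ℤ) + m)) = 1 * (-((N : ℤ) + m)) from by ring,
        ← hIter_conj S T h 1 hconj, ← hIter_conj S T h 1 hconj]
      exact hδX (HU m)
    · rw [show (-((N : ℤ) + m)) = (-1) * ((N : ℤ) + m) from by ring,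
        ← hIter_conj S T h (-1) hconj, ← hIter_conj S T h (-1) hconj]
      exact hδX (HS m)
  constructor
  · -- stable part
    show (hIter T.phi ((n : ℤ) + k0) (h x), hIter T.phi ((n : ℤ) + k0) (h z)) ∈ T.Gs0
    refine hshs _ _ ?_
    intro k
    rw [← hIter_add, ← hIter_add]
    have := TS k
    rw [show ((N : ℤ) + k) = (k : ℤ) + ((n : ℤ) + k0) from by push_cast [hN]; ring] at this
    exact lt_of_lt_of_le this (min_le_left _ _)
  · -- unstable part
    show (hIter T.phi (-((n : ℤ) + k0)) (h x), hIter T.phi (-((n : ℤ) + k0)) (h z)) ∈ T.Gu0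
    refine hshu _ _ ?_
    intro k
    rw [← hIter_add, ← hIter_add]
    have := TU k
    rw [show (-((N : ℤ) + k)) = -(k : ℤ) + -((n : ℤ) + k0) from by push_cast [hN]; ring] at this
    exact lt_of_lt_of_le this (min_le_right _ _)

lemma maps_ga (hε : ε = 1 ∨ ε = -1) (hconj : ∀ x : X, h (S.phi x) = hIter T.phi ε (h x)) :
    ∀ p : X × X, p ∈ S.Ga → (h p.1, h p.2) ∈ T.Ga := by
  obtain ⟨k0, hk0⟩ := maps_gaN S T h ε hε hconj
  rintro ⟨x, z⟩ hp
  obtain ⟨n, hn⟩ := Set.mem_iUnion.1 hp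
  refine Set.mem_iUnion.2 ⟨n + k0, ?_⟩
  have := hk0 n x z hn
  rwa [show (((n + k0 : ℕ)) : ℤ) = (n : ℤ) + k0 from by push_cast; ring]

end conj

end SmaleSpace
namespace SmaleSpace

variable {X Y : Type*} [MetricSpace X] [CompactSpace X] [MetricSpace Y] [CompactSpace Y]

variable (S : SmaleSpace X) (T : SmaleSpace Y) (h : X ≃ₜ Y) (ε : ℤ)

lemma cont_map (k0 : ℕ)
    (hmaps : ∀ (n : ℕ) (x z : X), (x, z) ∈ S.GaN n → (h x, h z) ∈ T.GaN ((n : ℤ) + k0))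
    (F : ↥S.Ga → ↥T.Ga)
    (hF : ∀ p : ↥S.Ga, (F p : Y × Y) = (h (p : X × X).1, h (p : X × X).2)) :
    @Continuous _ _ S.gaTopology T.gaTopology F := by
  letI tT := T.gaTopology
  show @Continuous _ _
    (⨆ n : ℕ, TopologicalSpace.coinduced (Set.inclusion (S.gaN_subset_ga n)) inferInstance)
    T.gaTopology F
  rw [continuous_iSup_dom]
  intro n
  rw [continuous_coinduced_dom]
  have hmaps' : ∀ p : ↥(S.GaN (n : ℤ)), ((h (p : X × X).1, h (p : X × X).2))
      ∈ T.GaN (((n + k0 : ℕ) : ℤ)) := by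
    intro p
    have := hmaps n (p : X × X).1 (p : X × X).2 p.2
    rwa [show ((n : ℤ) + k0) = ((n + k0 : ℕ) : ℤ) from by push_cast; ring] at this
  set g : ↥(S.GaN (n : ℤ)) → ↥(T.GaN (((n + k0 : ℕ) : ℤ))) :=
    fun p => ⟨(h (p : X × X).1, h (p : X × X).2), hmaps' p⟩ with hg
  have hgc : Continuous g := by
    apply Continuous.subtype_mk
    exact (h.continuous.comp (continuous_fst.comp continuous_subtype_val)).prodMk
      (h.continuous.comp (continuous_snd.comp continuous_subtype_val))
  have hinc : @Continuous _ _ _ T.gaTopology (Set.inclusion (T.gaN_subset_ga (n + k0))) := by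
    show @Continuous _ _ _
      (⨆ m : ℕ, TopologicalSpace.coinduced (Set.inclusion (T.gaN_subset_ga m)) inferInstance)
      (Set.inclusion (T.gaN_subset_ga (n + k0)))
    exact continuous_iSup_rng (i := n + k0) continuous_coinduced_rng
  have key : F ∘ Set.inclusion (S.gaN_subset_ga n)
      = Set.inclusion (T.gaN_subset_ga (n + k0)) ∘ g := by
    funext p
    apply Subtype.ext
    show (F (Set.inclusion (S.gaN_subset_ga n) p) : Y × Y) = _
    rw [hF]
    rfl
  rw [key]
  exact hinc.comp hgc

lemma cont_mapZ
    (Fg : ↥S.Ga → ↥T.Ga)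
    (hFg : @Continuous _ _ S.gaTopology T.gaTopology Fg)
    (hFgc : ∀ p : ↥S.Ga, (Fg p : Y × Y) = (h (p : X × X).1, h (p : X × X).2))
    (hconj : ∀ x : X, h (S.phi x) = hIter T.phi ε (h x))
    (FZ : ↥S.GaZ → ↥T.GaZ)
    (hFZ : ∀ q : ↥S.GaZ, (FZ q : Y × ℤ × Y)
      = (h (q : X × ℤ × X).1, ε * (q : X × ℤ × X).2.1, h (q : X × ℤ × X).2.2)) :
    @Continuous _ _ S.gaZTopology T.gaZTopology FZ := by
  letI tS := S.gaTopology
  letI tT := T.gaTopology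
  show @Continuous _ _
    (TopologicalSpace.induced S.gaZGamma (@instTopologicalSpaceProd _ _ S.gaTopology _))
    (TopologicalSpace.induced T.gaZGamma (@instTopologicalSpaceProd _ _ T.gaTopology _)) FZ
  rw [continuous_induced_rng]
  have key : T.gaZGamma ∘ FZ
      = (fun pq : ↥S.Ga × ℤ => (Fg pq.1, ε * pq.2)) ∘ S.gaZGamma := by
    funext q
    have h1 := hFZ q
    refine Prod.ext ?_ ?_
    · apply Subtype.ext
      show ((FZ q : Y × ℤ × Y).1, hIter T.phi (-(FZ q : Y × ℤ × Y).2.1) (FZ q : Y × ℤ × Y).2.2)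
        = (Fg (S.gaZGamma q).1 : Y × Y)
      rw [h1, hFgc]
      show (h (q : X × ℤ × X).1, hIter T.phi (-(ε * (q : X × ℤ × X).2.1)) (h (q : X × ℤ × X).2.2))
        = (h (q : X × ℤ × X).1, h (hIter S.phi (-(q : X × ℤ × X).2.1) (q : X × ℤ × X).2.2))
      rw [hIter_conj S T h ε hconj (-(q : X × ℤ × X).2.1) (q : X × ℤ × X).2.2]
      rw [show ε * -(q : X × ℤ × X).2.1 = -(ε * (q : X × ℤ × X).2.1) from by ring]
    · show (FZ q : Y × ℤ × Y).2.1 = ε * (q : X × ℤ × X).2.1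
      rw [h1]
  rw [key]
  have hG : @Continuous _ _ (@instTopologicalSpaceProd _ _ tS _)
      (@instTopologicalSpaceProd _ _ tT _)
      (fun pq : ↥S.Ga × ℤ => (Fg pq.1, ε * pq.2)) := by
    exact (hFg.comp continuous_fst).prodMk
      ((continuous_of_discreteTopology (α := ℤ)).comp continuous_snd)
  exact @Continuous.comp (↥S.GaZ) (↥S.Ga × ℤ) (↥T.Ga × ℤ)
    (TopologicalSpace.induced S.gaZGamma (@instTopologicalSpaceProd _ _ S.gaTopology _))
    (@instTopologicalSpaceProd _ _ S.gaTopology _)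
    (@instTopologicalSpaceProd _ _ T.gaTopology _)
    _ _ hG continuous_induced_dom

end SmaleSpace
/-- A conjugacy `h∘φ = ψ^ε∘h` (`ε = ±1`) induces isomorphisms of étale
groupoids `η : G_φ^a → G_ψ^a`, `(x,z) ↦ (h(x),h(z))`, and
`φ̃ : G_φ^a⋊ℤ → G_ψ^a⋊ℤ`, `(x,n,z) ↦ (h(x), εn, h(z))`; in particular
`G_φ^a ≅ G_ψ^a` and `G_φ^a⋊ℤ ≅ G_ψ^a⋊ℤ`. -/
theorem conjugacy_induces_groupoid_isos {X Y : Type*} [MetricSpace X] [CompactSpace X]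
    [MetricSpace Y] [CompactSpace Y] (S : SmaleSpace X) (T : SmaleSpace Y)
    (h : X ≃ₜ Y) (ε : ℤ) (hε : ε = 1 ∨ ε = -1)
    (hconj : ∀ x : X, h (S.phi x) = hIter T.phi ε (h x)) :
    (∃ E : SmaleSpace.GaIso S T, ∀ p : ↥S.Ga,
      (E.toEquiv p : Y × Y) = (h (p : X × X).1, h (p : X × X).2)) ∧
    (∃ F : SmaleSpace.GaZIso S T, ∀ g : ↥S.GaZ,
      (F.toEquiv g : Y × ℤ × Y)
        = (h (g : X × ℤ × X).1, ε * (g : X × ℤ × X).2.1, h (g : X × ℤ × X).2.2)) ∧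
    Nonempty (SmaleSpace.GaIso S T) ∧ Nonempty (SmaleSpace.GaZIso S T) := by
  have hεε : ε * ε = 1 := by rcases hε with rfl | rfl <;> norm_num
  have hconj' : ∀ y : Y, h.symm (T.phi y) = hIter S.phi ε (h.symm y) := by
    intro y
    have h1 := SmaleSpace.hIter_conj S T h ε hconj ε (h.symm y)
    rw [hεε, hIter_one, Homeomorph.apply_symm_apply] at h1
    rw [← h1, Homeomorph.symm_apply_apply]
  have memST := SmaleSpace.maps_ga S T h ε hε hconj
  have memTS := SmaleSpace.maps_ga T S h.symm ε hε hconj'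
  obtain ⟨k0, hk0⟩ := SmaleSpace.maps_gaN S T h ε hε hconj
  obtain ⟨k0', hk0'⟩ := SmaleSpace.maps_gaN T S h.symm ε hε hconj'
  -- the principal groupoid isomorphism
  let E : ↥S.Ga ≃ ↥T.Ga :=
    { toFun := fun p => ⟨(h (p : X × X).1, h (p : X × X).2), memST _ p.2⟩
      invFun := fun q => ⟨(h.symm (q : Y × Y).1, h.symm (q : Y × Y).2), memTS _ q.2⟩
      left_inv := fun p => by
        apply Subtype.ext
        show (h.symm (h (p : X × X).1), h.symm (h (p : X × X).2)) = (p : X × X)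
        rw [Homeomorph.symm_apply_apply, Homeomorph.symm_apply_apply]
      right_inv := fun q => by
        apply Subtype.ext
        show (h (h.symm (q : Y × Y).1), h (h.symm (q : Y × Y).2)) = (q : Y × Y)
        rw [Homeomorph.apply_symm_apply, Homeomorph.apply_symm_apply] }
  have hEcont : @Continuous _ _ S.gaTopology T.gaTopology E :=
    SmaleSpace.cont_map S T h k0 hk0 E (fun p => rfl)
  have hEcont' : @Continuous _ _ T.gaTopology S.gaTopology E.symm :=
    SmaleSpace.cont_map T S h.symm k0' hk0' E.symm (fun q => rfl)
  let EIso : SmaleSpace.GaIso S T :=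
    { toEquiv := E
      cont := hEcont
      cont_symm := hEcont'
      map_mul := by
        intro p q r h1 h2
        constructor
        · exact congrArg h h1
        · show (h (r : X × X).1, h (r : X × X).2) = _
          rw [h2]
          rfl }
  -- the semidirect product groupoid isomorphism
  have memZST : ∀ q : X × ℤ × X, q ∈ S.GaZ → (h q.1, ε * q.2.1, h q.2.2) ∈ T.GaZ := by
    intro q hq
    show (hIter T.phi (ε * q.2.1) (h q.1), h q.2.2) ∈ T.Ga
    rw [← SmaleSpace.hIter_conj S T h ε hconj]
    exact memST _ hq
  have memZTS : ∀ q : Y × ℤ × Y, q ∈ T.GaZ → (h.symm q.1, ε * q.2.1, h.symm q.2.2) ∈ S.GaZ := by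
    intro q hq
    show (hIter S.phi (ε * q.2.1) (h.symm q.1), h.symm q.2.2) ∈ S.Ga
    rw [← SmaleSpace.hIter_conj T S h.symm ε hconj']
    exact memTS _ hq
  let F : ↥S.GaZ ≃ ↥T.GaZ :=
    { toFun := fun q => ⟨(h (q : X × ℤ × X).1, ε * (q : X × ℤ × X).2.1,
        h (q : X × ℤ × X).2.2), memZST _ q.2⟩
      invFun := fun q => ⟨(h.symm (q : Y × ℤ × Y).1, ε * (q : Y × ℤ × Y).2.1,
        h.symm (q : Y × ℤ × Y).2.2), memZTS _ q.2⟩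
      left_inv := fun q => by
        apply Subtype.ext
        show (h.symm (h (q : X × ℤ × X).1), ε * (ε * (q : X × ℤ × X).2.1),
          h.symm (h (q : X × ℤ × X).2.2)) = (q : X × ℤ × X)
        rw [← mul_assoc, hεε, one_mul, Homeomorph.symm_apply_apply,
          Homeomorph.symm_apply_apply]
      right_inv := fun q => by
        apply Subtype.ext
        show (h (h.symm (q : Y × ℤ × Y).1), ε * (ε * (q : Y × ℤ × Y).2.1),
          h (h.symm (q : Y × ℤ × Y).2.2)) = (q : Y × ℤ × Y)
        rw [← mul_assoc, hεε, one_mul, Homeomorph.apply_symm_apply,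
          Homeomorph.apply_symm_apply] }
  have hFcont : @Continuous _ _ S.gaZTopology T.gaZTopology F :=
    SmaleSpace.cont_mapZ S T h ε E hEcont (fun p => rfl) hconj F (fun q => rfl)
  have hFcont' : @Continuous _ _ T.gaZTopology S.gaZTopology F.symm :=
    SmaleSpace.cont_mapZ T S h.symm ε E.symm hEcont' (fun q => rfl) hconj' F.symm
      (fun q => rfl)
  let FIso : SmaleSpace.GaZIso S T :=
    { toEquiv := F
      cont := hFcont
      cont_symm := hFcont'
      map_mul := by
        intro g g' gp h1 h2
        constructor
        · exact congrArg h h1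
        · show (h (gp : X × ℤ × X).1, ε * (gp : X × ℤ × X).2.1, h (gp : X × ℤ × X).2.2) = _
          rw [h2, mul_add]
          rfl }
  exact ⟨⟨EIso, fun p => rfl⟩, ⟨FIso, fun g => rfl⟩, ⟨EIso⟩, ⟨FIso⟩⟩
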